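/- Let M be a von Neumann algebra and (x_γ)_{γ∈Γ} a net of positive elements of M with x_γ order converging to 0 in M_sa. Then x_γ → 0 in the σ-strong topology, i.e., ψ(x_γ²) → 0 for every normal positive functional ψ on M. -/

import Mathlib

universe u

set_option maxHeartbeats 2000000

/-- A net `x`, indexed by a set with relation `r`, *order converges* to `l` in a poset if it is
squeezed between an increasing net with supremum `l` and a decreasing net with infimum `l`. -/
def OrderConvNet {ι P : Type*} (r : ι → ι → Prop) [Preorder P] (x : ι → P) (l : P) : Prop :=
  ∃ y z : ι → P,
    (∀ i j, r i j → y i ≤ y j) ∧ (∀ i j, r i j → z j ≤ z i) ∧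
    (∀ i, y i ≤ x i ∧ x i ≤ z i) ∧
    IsLUB (Set.range y) l ∧ IsGLB (Set.range z) l

/-- The `atTop` filter of a directed index set given by the relation `r`. -/
def netAtTop {ι : Type*} (r : ι → ι → Prop) : Filter ι :=
  ⨅ i, Filter.principal {j | r i j}

/-- The square root of an element with nonnegative real spectrum squares to the element. -/
private lemma sqrt_mul_sqrt_aux {A : Type*} [TopologicalSpace A] [Ring A] [StarRing A]
    [Algebra ℝ A] [ContinuousFunctionalCalculus ℝ A (IsSelfAdjoint : A → Prop)]
    (v : A) (hv : IsSelfAdjoint v) (hspec : ∀ t ∈ spectrum ℝ v, 0 ≤ t) :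
    cfc Real.sqrt v * cfc Real.sqrt v = v := by
  rw [← cfc_mul Real.sqrt Real.sqrt v]
  rw [cfc_congr (g := fun t : ℝ => t) fun t ht => Real.mul_self_sqrt (hspec t ht)]
  exact cfc_id' ℝ v

/-- If a net of positive elements of a von Neumann algebra `M` order converges to `0` in the
self-adjoint part of `M`, then it converges to `0` σ-strongly, i.e. `ψ(x_γ²) → 0` for every
normal positive functional `ψ` on `M`. -/
theorem stmt17 {H : Type u} [NormedAddCommGroup H] [InnerProductSpace ℂ H] [CompleteSpace H]
    (M : VonNeumannAlgebra H)
    (ι : Type u) (r : ι → ι → Prop)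
    (hpre : IsPreorder ι r) (hdir : IsDirected ι r) (hne : Nonempty ι)
    (x : ι → H →L[ℂ] H) (hxM : ∀ γ, x γ ∈ M) (hsa : ∀ γ, IsSelfAdjoint (x γ))
    (hpos : ∀ γ, 0 ≤ x γ)
    (hconv : OrderConvNet r
      (fun γ => (⟨x γ, hxM γ, hsa γ⟩ : {a : H →L[ℂ] H // a ∈ M ∧ IsSelfAdjoint a}))
      ⟨0, zero_mem M, by simp [IsSelfAdjoint]⟩)
    (ψ : ↥M.toStarSubalgebra →ₗ[ℂ] ℂ)
    (hψpos : ∀ a : ↥M.toStarSubalgebra,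
      0 ≤ (ψ (star a * a)).re ∧ (ψ (star a * a)).im = 0)
    (hψnormal : ∀ (κ : Type u) (r' : κ → κ → Prop),
      IsPreorder κ r' → IsDirected κ r' → Nonempty κ →
      ∀ w : κ → {a : H →L[ℂ] H // a ∈ M ∧ IsSelfAdjoint a},
        (∀ i j, r' i j → w j ≤ w i) → IsGLB (Set.range w)
            ⟨0, zero_mem M, by simp [IsSelfAdjoint]⟩ →
          Filter.Tendsto (fun i => (ψ ⟨(w i).val, (w i).prop.1⟩).re) (netAtTop r') (nhds 0)) :
    Filter.Tendsto (fun γ => (ψ ⟨x γ * x γ, mul_mem (hxM γ) (hxM γ)⟩).re)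
      (netAtTop r) (nhds 0) := by
  obtain ⟨y, z, hy, hz, hyz, hylub, hzglb⟩ := hconv
  -- `M` is a norm-closed subalgebra, being a double centralizer
  have hcent : ∀ s : Set (H →L[ℂ] H), IsClosed (Set.centralizer s) := by
    intro s
    have h2 : Set.centralizer s = ⋂ b ∈ s, {a : H →L[ℂ] H | b * a = a * b} := by
      ext a
      simp only [Set.mem_centralizer_iff, Set.mem_iInter, Set.mem_setOf_eq]
    rw [h2]
    exact isClosed_biInter fun b _ =>
      isClosed_eq (continuous_const.mul continuous_id) (continuous_id.mul continuous_const)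
  have hclosed : IsClosed (M.toStarSubalgebra : Set (H →L[ℂ] H)) := by
    have h3 := hcent (Set.centralizer (M : Set (H →L[ℂ] H)))
    rw [M.centralizer_centralizer] at h3
    exact h3
  haveI : IsClosed ((M.toStarSubalgebra : Set (H →L[ℂ] H))) := hclosed
  -- positivity of ψ on positive elements of M
  have key : ∀ a : ↥M.toStarSubalgebra, 0 ≤ (a : H →L[ℂ] H) →
      0 ≤ (ψ a).re ∧ (ψ a).im = 0 := by
    intro a ha
    have hsaA : IsSelfAdjoint (a : H →L[ℂ] H) := .of_nonneg ha
    have hsaS : IsSelfAdjoint a := Subtype.ext hsaA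
    have hspecS : ∀ t ∈ spectrum ℝ a, 0 ≤ t := by
      intro t ht
      refine spectrum_nonneg_of_nonneg ha ?_
      rw [← spectrum.algebraMap_mem_iff ℂ] at ht ⊢
      rwa [← StarSubalgebra.spectrum_eq (hS := hclosed) (a := a)]
    have hcsa : IsSelfAdjoint (cfc Real.sqrt a) := cfc_predicate Real.sqrt a
    have hmul : star (cfc Real.sqrt a) * (cfc Real.sqrt a) = a := by
      rw [hcsa.star_eq]
      exact sqrt_mul_sqrt_aux a hsaS hspecS
    have h := hψpos (cfc Real.sqrt a)
    rwa [hmul] at h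
  -- monotonicity of ψ
  have mono : ∀ a b : ↥M.toStarSubalgebra, (a : H →L[ℂ] H) ≤ (b : H →L[ℂ] H) →
      (ψ a).re ≤ (ψ b).re := by
    intro a b hab
    have h := (key (b - a) (by
      rw [AddSubgroupClass.coe_sub]
      exact sub_nonneg.mpr hab)).1
    rw [map_sub] at h
    simp only [Complex.sub_re, sub_nonneg] at h
    exact h
  -- normality gives ψ(z γ) → 0
  have hψz := hψnormal ι r hpre hdir hne z hz hzglb
  set F : ι → ↥M.toStarSubalgebra := fun γ => ⟨x γ, hxM γ⟩ with hF
  -- ψ(x γ) → 0 by squeezing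
  have hx0 : Filter.Tendsto (fun γ => (ψ (F γ)).re) (netAtTop r) (nhds 0) := by
    refine tendsto_of_tendsto_of_tendsto_of_le_of_le tendsto_const_nhds hψz
      (fun γ => (key (F γ) (hpos γ)).1)
      (fun γ => mono (F γ) ⟨(z γ).val, (z γ).prop.1⟩ ?_)
    exact Subtype.coe_le_coe.mpr (hyz γ).2
  obtain ⟨γ0⟩ := hne
  set k : ℝ := ‖((z γ0 : {a : H →L[ℂ] H // a ∈ M ∧ IsSelfAdjoint a}) : H →L[ℂ] H)‖ with hk
  -- eventual bound ψ(x γ ^ 2) ≤ k ψ(x γ)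
  have hbound : ∀ γ, r γ0 γ →
      (ψ ⟨x γ * x γ, mul_mem (hxM γ) (hxM γ)⟩).re ≤ k * (ψ (F γ)).re := by
    intro γ hγ
    have h1 : (x γ) ≤ ((z γ0 : {a : H →L[ℂ] H // a ∈ M ∧ IsSelfAdjoint a}) : H →L[ℂ] H) :=
      le_trans (Subtype.coe_le_coe.mpr (hyz γ).2) (Subtype.coe_le_coe.mpr (hz γ0 γ hγ))
    have h2 : (x γ) ≤ algebraMap ℝ (H →L[ℂ] H) k :=
      h1.trans ((z γ0).prop.2.le_algebraMap_norm_self)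
    set s := cfc Real.sqrt (x γ) with hs
    have hssa : IsSelfAdjoint s := cfc_predicate Real.sqrt (x γ)
    have hss : s * s = x γ :=
      sqrt_mul_sqrt_aux (x γ) (hsa γ)
        (fun t ht => spectrum_nonneg_of_nonneg (hpos γ) ht)
    have conj := star_left_conjugate_le_conjugate h2 s
    rw [hssa.star_eq] at conj
    have hL : s * x γ * s = x γ * x γ := by rw [← hss]; noncomm_ring
    have hR : s * algebraMap ℝ (H →L[ℂ] H) k * s = k • x γ := by
      rw [Algebra.algebraMap_eq_smul_one, mul_smul_comm, mul_one, smul_mul_assoc, hss]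
    rw [hL, hR] at conj
    -- transfer to the subalgebra
    have hd : 0 ≤ ((((k : ℂ) • F γ
        - ⟨x γ * x γ, mul_mem (hxM γ) (hxM γ)⟩ : ↥M.toStarSubalgebra)) : H →L[ℂ] H) := by
      rw [AddSubgroupClass.coe_sub, sub_nonneg]
      have : (((k : ℂ) • F γ : ↥M.toStarSubalgebra) : H →L[ℂ] H) = k • x γ := by
        rw [SetLike.val_smul]
        rw [show ((k : ℂ)) = algebraMap ℝ ℂ k from rfl, algebraMap_smul]
      rw [this]
      exact conj
    have hkey := (key _ hd).1
    rw [map_sub, map_smul] at hkey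
    simp only [smul_eq_mul, Complex.sub_re, sub_nonneg, Complex.re_ofReal_mul] at hkey
    exact hkey
  -- conclude by squeezing
  have hupper : Filter.Tendsto (fun γ => k * (ψ (F γ)).re) (netAtTop r) (nhds 0) := by
    simpa using hx0.const_mul k
  refine tendsto_of_tendsto_of_tendsto_of_le_of_le' tendsto_const_nhds hupper
    (Filter.Eventually.of_forall fun γ => ?_) ?_
  · have h := (hψpos (F γ)).1
    have hst : star (F γ) = F γ := Subtype.ext (hsa γ)
    rw [hst] at h
    exact h
  · have hmem : {j | r γ0 j} ∈ netAtTop r :=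
      Filter.mem_iInf_of_mem γ0 (Filter.mem_principal_self _)
    exact Filter.eventually_of_mem hmem hbound
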